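/- arXiv:math/0005281 — 2 statements merged into one kernel-verified Lean document; each statement's English description precedes it below -/
import Mathlib

section
/- Let C be a nonzero 𝔽[z,z^{-1}]-submodule of 𝔽^n[z,z^{-1}] (equivalently, a nonzero 𝔽[z]-submodule of 𝔽^n[z]), viewed as a set of finite-support sequences in (𝔽^n)^ℤ. Then C is controllable and not complete (equivalently, not closed in the product topology). -/
open Matrix

section ConvolutionalDefs

variable {𝔽 : Type} [Field 𝔽]

/-- The left shift `(σw)_t = w_{t+1}` on bi-infinite sequences. -/
def shiftZ {A : Type} (w : ℤ → A) : ℤ → A := fun t => w (t + 1)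

/-- A set of bi-infinite sequences is shift-invariant if `σX ⊆ X`. -/
def ShiftInvariant {A : Type} (X : Set (ℤ → A)) : Prop := ∀ w ∈ X, shiftZ w ∈ X

/-- A block `β` occurs in the bi-infinite sequence `w` if `β = w_j w_{j+1} … w_{j+k-1}`
for some `j ∈ ℤ`. -/
def BlockOccursIn {A : Type} (β : List A) (w : ℤ → A) : Prop :=
  ∃ j : ℤ, ∀ l : Fin β.length, β.get l = w (j + ((l : ℕ) : ℤ))

/-- A block occurs in some element of the set `X`. -/
def OccursInSome {A : Type} (β : List A) (X : Set (ℤ → A)) : Prop :=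
  ∃ w ∈ X, BlockOccursIn β w

/-- A set of sequences is irreducible if any ordered pair of blocks occurring in it can be
completed to a single block occurring in it. -/
def IrreducibleShift {A : Type} (X : Set (ℤ → A)) : Prop :=
  ∀ β γ : List A, OccursInSome β X → OccursInSome γ X →
    ∃ μ : List A, OccursInSome (β ++ μ ++ γ) X

/-- A subset of a module is `𝔽`-linear. -/
def IsLinearSet' (𝔽 : Type) [Field 𝔽] {M : Type} [AddCommGroup M] [Module 𝔽 M]
    (C : Set M) : Prop :=
  (0 : M) ∈ C ∧ (∀ x ∈ C, ∀ y ∈ C, x + y ∈ C) ∧ ∀ (c : 𝔽), ∀ x ∈ C, c • x ∈ C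

/-- A behavior `B` is complete if membership can be decided on finite windows:
any `w` which agrees on every finite interval with some element of `B` lies in `B`. -/
def CompleteBehavior {A : Type} (B : Set (ℤ → A)) : Prop :=
  ∀ w : ℤ → A, (∀ a b : ℤ, ∃ x ∈ B, ∀ t : ℤ, a ≤ t → t ≤ b → x t = w t) → w ∈ B

/-- A behavior `B ⊆ (𝔽^n)^ℤ` is controllable if there is `ℓ ≥ 0` such that any past of a
trajectory of `B` can be concatenated, after a lag of length `ℓ`, with any future of a
trajectory of `B`. -/
def ControllableBehavior {A : Type} (B : Set (ℤ → A)) : Prop :=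
  ∃ ℓ : ℕ, ∀ w ∈ B, ∀ w' ∈ B, ∀ j : ℤ, ∃ w'' ∈ B,
    (∀ t : ℤ, t ≤ j → w'' t = w t) ∧ (∀ t : ℤ, j + (ℓ : ℤ) ≤ t → w'' t = w' t)

/-- The operator `G(σ)` associated to a Laurent-polynomial matrix `G(z) = Σ_i G_i z^i`:
`(G(σ)m)_t = Σ_i G_i m_{t+i}`. -/
noncomputable def lSigma {n k : ℕ} (G : Matrix (Fin n) (Fin k) (LaurentPolynomial 𝔽))
    (m : ℤ → Fin k → 𝔽) : ℤ → Fin n → 𝔽 :=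
  fun t a => ∑ b : Fin k, (AddMonoidAlgebra.coeff (G a b)).sum fun i c => c * m (t + i) b

/-- The operator `P(σ)` associated to a polynomial matrix, acting on two-sided sequences. -/
noncomputable def pSigma {n k : ℕ} (P : Matrix (Fin n) (Fin k) (Polynomial 𝔽))
    (w : ℤ → Fin k → 𝔽) : ℤ → Fin n → 𝔽 :=
  fun t a => ∑ b : Fin k, (P a b).sum fun i c => c * w (t + (i : ℤ)) b

/-- The operator `P(σ)` associated to a polynomial matrix, acting on one-sided sequences. -/
noncomputable def pSigmaPlus {n k : ℕ} (P : Matrix (Fin n) (Fin k) (Polynomial 𝔽))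
    (w : ℕ → Fin k → 𝔽) : ℕ → Fin n → 𝔽 :=
  fun t a => ∑ b : Fin k, (P a b).sum fun i c => c * w (t + i) b

/-- View a vector of formal Laurent series as a bi-infinite sequence. -/
def lsToSeq {n : ℕ} (v : Fin n → LaurentSeries 𝔽) : ℤ → Fin n → 𝔽 :=
  fun t a => (v a).coeff t

/-- View a vector of Laurent polynomials as a (finite-support) bi-infinite sequence. -/
def lpToSeq {n : ℕ} (v : Fin n → LaurentPolynomial 𝔽) : ℤ → Fin n → 𝔽 :=
  fun t a => AddMonoidAlgebra.coeff (v a) t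

/-- The pairing `(w,v) = Σ_i ⟨w_i, v_i⟩` between a bi-infinite sequence and a finite-support
(Laurent polynomial) vector. -/
noncomputable def seqPairing {n : ℕ} (w : ℤ → Fin n → 𝔽) (v : Fin n → LaurentPolynomial 𝔽) : 𝔽 :=
  ∑ a : Fin n, (AddMonoidAlgebra.coeff (v a)).sum fun i c => w i a * c

/-- The `j`-th column degree of a polynomial matrix. -/
def colDeg {n k : ℕ} (G : Matrix (Fin n) (Fin k) (Polynomial 𝔽)) (j : Fin k) : ℕ :=
  Finset.univ.sup fun i => (G i j).natDegree

/-- The `i`-th row degree of a polynomial matrix. -/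
def rowDeg {r n : ℕ} (P : Matrix (Fin r) (Fin n) (Polynomial 𝔽)) (i : Fin r) : ℕ :=
  Finset.univ.sup fun j => (P i j).natDegree

/-- A polynomial `n×k` matrix is column reduced if the constant matrix of leading column
coefficients has rank `k`. -/
def ColumnReduced {n k : ℕ} (G : Matrix (Fin n) (Fin k) (Polynomial 𝔽)) : Prop :=
  Matrix.rank (Matrix.of fun i j => (G i j).coeff (colDeg G j)) = k

/-- A polynomial `r×n` matrix is row reduced if the constant matrix of leading row
coefficients has rank `r`. -/
def RowReduced {r n : ℕ} (P : Matrix (Fin r) (Fin n) (Polynomial 𝔽)) : Prop :=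
  Matrix.rank (Matrix.of fun i j => (P i j).coeff (rowDeg P i)) = r

/-- A matrix over a commutative ring is right prime if it has a left inverse over the ring. -/
def RightPrime {R : Type} [CommRing R] {m l : Type} [Fintype m] [Fintype l] [DecidableEq l]
    (G : Matrix m l R) : Prop :=
  ∃ L : Matrix l m R, L * G = 1

/-- A matrix over a commutative ring is left prime if it has a right inverse over the ring. -/
def LeftPrime {R : Type} [CommRing R] {m l : Type} [Fintype m] [Fintype l] [DecidableEq m]
    (P : Matrix m l R) : Prop :=
  ∃ Q : Matrix l m R, P * Q = 1

end ConvolutionalDefs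

/-- View a vector of polynomials as a (finite-support) bi-infinite sequence supported on `ℤ₊`. -/
noncomputable def pToSeq {𝔽 : Type} [Field 𝔽] {n : ℕ} (v : Fin n → Polynomial 𝔽) :
    ℤ → Fin n → 𝔽 :=
  fun t a => if 0 ≤ t then (v a).coeff t.toNat else 0


namespace FSCC

open Polynomial

variable {𝔽 : Type} [Field 𝔽]

/-- coefficient of a Laurent polynomial -/
def lpc (f : LaurentPolynomial 𝔽) (t : ℤ) : 𝔽 := AddMonoidAlgebra.coeff f t

lemma lpc_lpToSeq {n : ℕ} (v : Fin n → LaurentPolynomial 𝔽) (t : ℤ) (a : Fin n) :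
    lpToSeq v t a = lpc (v a) t := rfl

lemma lp_T_mul_apply (m t : ℤ) (f : LaurentPolynomial 𝔽) :
    lpc (LaurentPolynomial.T m * f) t = lpc f (t - m) := by
  unfold lpc
  rw [show (LaurentPolynomial.T m : LaurentPolynomial 𝔽) = AddMonoidAlgebra.single m 1 from rfl,
    AddMonoidAlgebra.coeff_single_mul_apply, one_mul]
  ring_nf

lemma lp_mul_apply_eq_zero {f g : LaurentPolynomial 𝔽} {t : ℤ}
    (h : ∀ x y : ℤ, x + y = t → lpc f x * lpc g y = 0) : lpc (f * g) t = 0 := by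
  show (f * g).coeff t = 0
  rw [AddMonoidAlgebra.coeff_mul]
  refine Finset.sum_eq_zero fun x hx => Finset.sum_eq_zero fun y hy => ?_
  show (if x + y = t then f.coeff x * g.coeff y else 0) = 0
  split_ifs with hxy
  · exact h x y hxy
  · rfl

lemma lpc_sub (f g : LaurentPolynomial 𝔽) (t : ℤ) : lpc (f - g) t = lpc f t - lpc g t :=
  Finsupp.sub_apply f.coeff g.coeff t

lemma lpc_sum {α : Type} (S : Finset α) (f : α → LaurentPolynomial 𝔽) (t : ℤ) :
    lpc (∑ i ∈ S, f i) t = ∑ i ∈ S, lpc (f i) t :=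
  by unfold lpc; rw [AddMonoidAlgebra.coeff_sum, Finsupp.finset_sum_apply]

noncomputable def lpSplice (p q : LaurentPolynomial 𝔽) (s : ℤ) : LaurentPolynomial 𝔽 :=
  AddMonoidAlgebra.ofCoeff (Finsupp.filter (fun x => x ≤ s) p.coeff + Finsupp.filter (fun x => s < x) q.coeff : ℤ →₀ 𝔽)

lemma lpSplice_apply_le {p q : LaurentPolynomial 𝔽} {s x : ℤ} (h : x ≤ s) :
    lpc (lpSplice p q s) x = lpc p x := by
  show (Finsupp.filter _ p.coeff + Finsupp.filter _ q.coeff : ℤ →₀ 𝔽) x = p.coeff x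
  rw [Finsupp.add_apply, Finsupp.filter_apply, Finsupp.filter_apply, if_pos h,
    if_neg (not_lt.mpr h), add_zero]

lemma lpSplice_apply_gt {p q : LaurentPolynomial 𝔽} {s x : ℤ} (h : s < x) :
    lpc (lpSplice p q s) x = lpc q x := by
  show (Finsupp.filter _ p.coeff + Finsupp.filter _ q.coeff : ℤ →₀ 𝔽) x = q.coeff x
  rw [Finsupp.add_apply, Finsupp.filter_apply, Finsupp.filter_apply, if_pos h,
    if_neg (not_le.mpr h), zero_add]

lemma lp_support_mem {f : LaurentPolynomial 𝔽} {x : ℤ} (h : lpc f x ≠ 0) :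
    x ∈ f.coeff.support := Finsupp.mem_support_iff.mpr h

lemma comb_apply {n : ℕ} (S : Finset (Fin n → LaurentPolynomial 𝔽))
    (c : (Fin n → LaurentPolynomial 𝔽) → LaurentPolynomial 𝔽) (a : Fin n) (t : ℤ) :
    lpc ((∑ g ∈ S, c g • g) a) t = ∑ g ∈ S, lpc (c g * g a) t := by
  have h1 : (∑ g ∈ S, c g • g) a = ∑ g ∈ S, c g * g a := by
    rw [Finset.sum_apply]
    exact Finset.sum_congr rfl fun g _ => rfl
  rw [h1, lpc_sum]

/-- Generic: a sequence approximable on every finite window lies in the closure. -/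
lemma approx_mem_closure {A : Type} [TopologicalSpace A] [DiscreteTopology A]
    (B : Set (ℤ → A)) (w : ℤ → A)
    (h : ∀ a b : ℤ, ∃ x ∈ B, ∀ t : ℤ, a ≤ t → t ≤ b → x t = w t) :
    w ∈ closure B := by
  rw [mem_closure_iff]
  intro o ho hwo
  obtain ⟨I, u, hu, hsub⟩ := isOpen_pi_iff.mp ho w hwo
  set m : ℕ := I.sup fun i => i.natAbs with hm
  obtain ⟨x, hxB, hx⟩ := h (-(m : ℤ)) (m : ℤ)
  refine ⟨x, hsub ?_, hxB⟩
  intro i hi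
  have h1 : (i.natAbs : ℤ) ≤ (m : ℤ) := by
    exact_mod_cast Finset.le_sup (f := fun i : ℤ => i.natAbs) hi
  have h2 : x i = w i := by
    refine hx i ?_ ?_ <;> omega
  rw [h2]
  exact (hu i hi).2

lemma witness_conclusions {A : Type} [TopologicalSpace A] [DiscreteTopology A]
    (B : Set (ℤ → A)) (w : ℤ → A)
    (h : ∀ a b : ℤ, ∃ x ∈ B, ∀ t : ℤ, a ≤ t → t ≤ b → x t = w t)
    (hnm : w ∉ B) : ¬ CompleteBehavior B ∧ ¬ IsClosed B := by
  constructor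
  · intro hc; exact hnm (hc w h)
  · intro hc; exact hnm (hc.closure_eq ▸ approx_mem_closure B w h)

lemma laurent_controllable (n : ℕ)
    (C : Submodule (LaurentPolynomial 𝔽) (Fin n → LaurentPolynomial 𝔽)) :
    ControllableBehavior (lpToSeq '' (C : Set (Fin n → LaurentPolynomial 𝔽))) := by
  haveI : IsNoetherianRing (LaurentPolynomial 𝔽) :=
    haveI := LaurentPolynomial.isLocalization (R := 𝔽)
    IsLocalization.isNoetherianRing (Submonoid.powers (Polynomial.X : Polynomial 𝔽))
      (LaurentPolynomial 𝔽) inferInstance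
  obtain ⟨S, hS⟩ := IsNoetherian.noetherian C
  set T : Finset ℤ := S.biUnion fun g => Finset.univ.biUnion fun a => (g a).coeff.support
    with hT
  set M : ℕ := T.sup fun i => i.natAbs with hM
  have hbound : ∀ g ∈ S, ∀ a : Fin n, ∀ x : ℤ, lpc (g a) x ≠ 0 → -(M:ℤ) ≤ x ∧ x ≤ (M:ℤ) := by
    intro g hg a x hx
    have hxT : x ∈ T := by
      rw [hT]
      exact Finset.mem_biUnion.mpr ⟨g, hg,
        Finset.mem_biUnion.mpr ⟨a, Finset.mem_univ a, lp_support_mem hx⟩⟩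
    have : (x.natAbs : ℤ) ≤ (M : ℤ) := by
      exact_mod_cast Finset.le_sup (f := fun i : ℤ => i.natAbs) hxT
    omega
  refine ⟨2 * M + 1, ?_⟩
  rintro w ⟨v, hvC, rfl⟩ w' ⟨v', hv'C, rfl⟩ j
  rw [← hS] at hvC hv'C
  obtain ⟨f, -, hf⟩ := Submodule.mem_span_finset.mp hvC
  obtain ⟨f', -, hf'⟩ := Submodule.mem_span_finset.mp hv'C
  set s : ℤ := j + M with hs
  refine ⟨lpToSeq (∑ g ∈ S, lpSplice (f g) (f' g) s • g),
    ⟨_, ?_, rfl⟩, ?_, ?_⟩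
  · rw [← hS]
    exact Submodule.sum_mem _ fun g hg => Submodule.smul_mem _ _ (Submodule.subset_span hg)
  · -- past: t ≤ j
    intro t ht
    funext a
    rw [lpc_lpToSeq, lpc_lpToSeq, comb_apply, ← hf, comb_apply]
    refine Finset.sum_congr rfl fun g hg => ?_
    have hz : lpc ((lpSplice (f g) (f' g) s - f g) * g a) t = 0 := by
      refine lp_mul_apply_eq_zero fun x y hxy => ?_
      by_cases hy : lpc (g a) y = 0
      · rw [hy, mul_zero]
      · have hb := hbound g hg a y hy
        have hx : x ≤ s := by omega
        rw [lpc_sub, lpSplice_apply_le hx, sub_self, zero_mul]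
    rw [sub_mul, lpc_sub, sub_eq_zero] at hz
    exact hz
  · -- future: j + (2M+1) ≤ t
    intro t ht
    push_cast at ht
    funext a
    rw [lpc_lpToSeq, lpc_lpToSeq, comb_apply, ← hf', comb_apply]
    refine Finset.sum_congr rfl fun g hg => ?_
    have hz : lpc ((lpSplice (f g) (f' g) s - f' g) * g a) t = 0 := by
      refine lp_mul_apply_eq_zero fun x y hxy => ?_
      by_cases hy : lpc (g a) y = 0
      · rw [hy, mul_zero]
      · have hb := hbound g hg a y hy
        have hx : s < x := by omega
        rw [lpc_sub, lpSplice_apply_gt hx, sub_self, zero_mul]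
    rw [sub_mul, lpc_sub, sub_eq_zero] at hz
    exact hz

lemma laurent_witness (n : ℕ)
    (C : Submodule (LaurentPolynomial 𝔽) (Fin n → LaurentPolynomial 𝔽)) (hC : C ≠ ⊥) :
    ∃ w : ℤ → Fin n → 𝔽,
      (∀ a b : ℤ, ∃ x ∈ lpToSeq '' (C : Set (Fin n → LaurentPolynomial 𝔽)),
        ∀ t : ℤ, a ≤ t → t ≤ b → x t = w t) ∧
      w ∉ lpToSeq '' (C : Set (Fin n → LaurentPolynomial 𝔽)) := by
  obtain ⟨v, hvC, hv0⟩ := (Submodule.ne_bot_iff C).mp hC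
  have hex : ∃ a₀ m₀, lpc (v a₀) m₀ ≠ 0 := by
    obtain ⟨a₀, ha₀⟩ := Function.ne_iff.mp hv0
    obtain ⟨m₀, hm₀⟩ := Finsupp.ne_iff.mp (show (v a₀).coeff ≠ 0 by simpa using ha₀)
    exact ⟨a₀, m₀, hm₀⟩
  obtain ⟨a₀, m₀, hm₀⟩ := hex
  set T : Finset ℤ := Finset.univ.biUnion fun a => (v a).coeff.support with hT
  have hm₀T : m₀ ∈ T := Finset.mem_biUnion.mpr ⟨a₀, Finset.mem_univ _, lp_support_mem hm₀⟩
  have hne : T.Nonempty := ⟨m₀, hm₀T⟩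
  set A : ℤ := T.min' hne with hA
  set N : ℤ := T.max' hne - A + 1 with hN
  have hNpos : 0 < N := by
    have := Finset.min'_le T m₀ hm₀T
    have := Finset.le_max' T m₀ hm₀T
    omega
  have hsup : ∀ (a : Fin n) (x : ℤ), lpc (v a) x ≠ 0 → A ≤ x ∧ x < A + N := by
    intro a x hx
    have hxT : x ∈ T := Finset.mem_biUnion.mpr ⟨a, Finset.mem_univ _, lp_support_mem hx⟩
    have h1 := Finset.min'_le T x hxT
    have h2 := Finset.le_max' T x hxT
    omega
  refine ⟨fun t a => lpc (v a) (A + (t - A) % N), ?_, ?_⟩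
  · -- approximation on windows
    intro a b
    refine ⟨lpToSeq (∑ k ∈ Finset.Icc ((a - A) / N) ((b - A) / N),
        (LaurentPolynomial.T (N * k) : LaurentPolynomial 𝔽) • v),
      ⟨_, Submodule.sum_mem _ fun k _ => Submodule.smul_mem _ _ hvC, rfl⟩, ?_⟩
    intro t hta htb
    funext c
    rw [lpc_lpToSeq]
    have h1 : (∑ k ∈ Finset.Icc ((a - A) / N) ((b - A) / N),
        (LaurentPolynomial.T (N * k) : LaurentPolynomial 𝔽) • v) c
        = ∑ k ∈ Finset.Icc ((a - A) / N) ((b - A) / N), LaurentPolynomial.T (N * k) * v c := by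
      rw [Finset.sum_apply]
      exact Finset.sum_congr rfl fun k _ => rfl
    rw [h1, lpc_sum]
    have h2 : ∀ k, lpc (LaurentPolynomial.T (N * k) * v c) t = lpc (v c) (t - N * k) :=
      fun k => lp_T_mul_apply _ _ _
    rw [Finset.sum_congr rfl fun k _ => h2 k]
    have hmem : (t - A) / N ∈ Finset.Icc ((a - A) / N) ((b - A) / N) := by
      rw [Finset.mem_Icc]
      constructor
      · exact Int.ediv_le_ediv hNpos (by omega)
      · exact Int.ediv_le_ediv hNpos (by omega)
    rw [Finset.sum_eq_single_of_mem _ hmem ?side]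
    case side =>
      intro k _ hk
      by_contra hnz
      have hb := hsup c _ hnz
      have hr : t - A = (t - A - N * k) + N * k := by ring
      have : (t - A) / N = k := by
        rw [hr, Int.add_mul_ediv_left _ _ (by omega : N ≠ 0),
          Int.ediv_eq_zero_of_lt (by omega) (by omega), zero_add]
      exact hk this.symm
    · have hme := Int.emod_add_mul_ediv (t - A) N
      have h3 : t - N * ((t - A) / N) = A + (t - A) % N := by linarith
      rw [h3]
  · -- not in the image
    rintro ⟨u, huC, hu⟩
    obtain ⟨Tb, hTb⟩ := Finset.bddAbove ((u a₀).coeff.support)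
    set k : ℤ := (Tb - m₀).toNat + 1 with hk
    set t : ℤ := m₀ + N * k with ht
    have hkpos : 0 < k := by positivity
    have hlarge : Tb < t := by
      have h1 : (Tb - m₀ : ℤ) ≤ ((Tb - m₀).toNat : ℤ) := Int.self_le_toNat _
      nlinarith
    have hu0 : lpc (u a₀) t = 0 := by
      by_contra h
      exact absurd (hTb (lp_support_mem h)) (by omega)
    have hw : lpc (v a₀) (A + (t - A) % N) ≠ 0 := by
      have hb := hsup a₀ m₀ hm₀
      have : (t - A) % N = m₀ - A := by
        rw [show t - A = (m₀ - A) + N * k from by omega, Int.add_mul_emod_self_left]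
        exact Int.emod_eq_of_lt (by omega) (by omega)
      rw [this, show A + (m₀ - A) = m₀ from by ring]
      exact hm₀
    have := congrFun (congrFun hu t) a₀
    rw [lpc_lpToSeq] at this
    rw [this] at hu0
    exact hw hu0

lemma p_mul_coeff_eq_zero {p q : Polynomial 𝔽} {t : ℕ}
    (h : ∀ x y : ℕ, x + y = t → p.coeff x * q.coeff y = 0) : (p * q).coeff t = 0 := by
  rw [Polynomial.coeff_mul]
  exact Finset.sum_eq_zero fun x hx => h x.1 x.2 (Finset.HasAntidiagonal.mem_antidiagonal.mp hx)

noncomputable def pSplice (p q : Polynomial 𝔽) (s : ℕ) : Polynomial 𝔽 :=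
  ⟨AddMonoidAlgebra.ofCoeff (Finsupp.filter (fun x => x ≤ s) p.toFinsupp.coeff + Finsupp.filter (fun x => s < x) q.toFinsupp.coeff)⟩

lemma pSplice_coeff_le {p q : Polynomial 𝔽} {s x : ℕ} (h : x ≤ s) :
    (pSplice p q s).coeff x = p.coeff x := by
  rw [pSplice, Polynomial.coeff_ofFinsupp, AddMonoidAlgebra.coeff_ofCoeff, Finsupp.add_apply, Finsupp.filter_apply,
    Finsupp.filter_apply, if_pos h, if_neg (not_lt.mpr h), add_zero]
  rfl

lemma pSplice_coeff_gt {p q : Polynomial 𝔽} {s x : ℕ} (h : s < x) :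
    (pSplice p q s).coeff x = q.coeff x := by
  rw [pSplice, Polynomial.coeff_ofFinsupp, AddMonoidAlgebra.coeff_ofCoeff, Finsupp.add_apply, Finsupp.filter_apply,
    Finsupp.filter_apply, if_pos h, if_neg (not_le.mpr h), zero_add]
  rfl

lemma p_comb_coeff {n : ℕ} (S : Finset (Fin n → Polynomial 𝔽))
    (c : (Fin n → Polynomial 𝔽) → Polynomial 𝔽) (a : Fin n) (m : ℕ) :
    ((∑ g ∈ S, c g • g) a).coeff m = ∑ g ∈ S, (c g * g a).coeff m := by
  have h1 : (∑ g ∈ S, c g • g) a = ∑ g ∈ S, c g * g a := by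
    rw [Finset.sum_apply]
    exact Finset.sum_congr rfl fun g _ => rfl
  rw [h1, Polynomial.finset_sum_coeff]

lemma poly_controllable (n : ℕ)
    (D : Submodule (Polynomial 𝔽) (Fin n → Polynomial 𝔽)) :
    ControllableBehavior (pToSeq '' (D : Set (Fin n → Polynomial 𝔽))) := by
  obtain ⟨S, hS⟩ := IsNoetherian.noetherian D
  obtain ⟨B, hbound⟩ : ∃ B : ℕ, ∀ g ∈ S, ∀ a : Fin n, ∀ y : ℕ, (g a).coeff y ≠ 0 → y ≤ B := by
    refine ⟨S.sup fun g => Finset.univ.sup fun a => (g a).natDegree, ?_⟩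
    intro g hg a y hy
    calc y ≤ (g a).natDegree := le_natDegree_of_ne_zero hy
    _ ≤ Finset.univ.sup fun a => (g a).natDegree :=
        Finset.le_sup (f := fun a => (g a).natDegree) (Finset.mem_univ a)
    _ ≤ _ := Finset.le_sup (f := fun g => Finset.univ.sup fun a => (g a).natDegree) hg
  refine ⟨B + 1, ?_⟩
  rintro w ⟨v, hvD, rfl⟩ w' ⟨v', hv'D, rfl⟩ j
  rw [← hS] at hvD hv'D
  obtain ⟨f, -, hf⟩ := Submodule.mem_span_finset.mp hvD
  obtain ⟨f', -, hf'⟩ := Submodule.mem_span_finset.mp hv'D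
  by_cases hj : j < 0
  · refine ⟨pToSeq v', ⟨v', hS ▸ hv'D, rfl⟩, ?_, fun t _ => rfl⟩
    intro t ht
    funext a
    have hneg : ¬ (0 ≤ t) := by omega
    simp [pToSeq, hneg]
  · set s : ℕ := j.toNat with hs
    have hsj : (s : ℤ) = j := Int.toNat_of_nonneg (by omega)
    refine ⟨pToSeq (∑ g ∈ S, pSplice (f g) (f' g) s • g),
      ⟨_, hS ▸ Submodule.sum_mem _ fun g hg => Submodule.smul_mem _ _ (Submodule.subset_span hg),
        rfl⟩, ?_, ?_⟩
    · intro t ht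
      funext a
      by_cases htn : 0 ≤ t
      · have hm : t.toNat ≤ s := by omega
        show (if 0 ≤ t then _ else _) = (if 0 ≤ t then _ else _)
        rw [if_pos htn, if_pos htn, p_comb_coeff, ← hf, p_comb_coeff]
        refine Finset.sum_congr rfl fun g hg => ?_
        have hz : ((pSplice (f g) (f' g) s - f g) * g a).coeff t.toNat = 0 := by
          refine p_mul_coeff_eq_zero fun x y hxy => ?_
          rw [Polynomial.coeff_sub, pSplice_coeff_le (by omega), sub_self, zero_mul]
        rw [sub_mul, Polynomial.coeff_sub, sub_eq_zero] at hz
        exact hz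
      · show (if 0 ≤ t then _ else _) = (if 0 ≤ t then _ else _)
        rw [if_neg htn, if_neg htn]
    · intro t ht
      push_cast at ht
      have htn : 0 ≤ t := by omega
      have hm : s + B + 1 ≤ t.toNat := by omega
      funext a
      show (if 0 ≤ t then _ else _) = (if 0 ≤ t then _ else _)
      rw [if_pos htn, if_pos htn, p_comb_coeff, ← hf', p_comb_coeff]
      refine Finset.sum_congr rfl fun g hg => ?_
      have hz : ((pSplice (f g) (f' g) s - f' g) * g a).coeff t.toNat = 0 := by
        refine p_mul_coeff_eq_zero fun x y hxy => ?_
        by_cases hy : (g a).coeff y = 0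
        · rw [Polynomial.coeff_sub, hy, mul_zero]
        · have := hbound g hg a y hy
          rw [Polynomial.coeff_sub, pSplice_coeff_gt (by omega), sub_self, zero_mul]
      rw [sub_mul, Polynomial.coeff_sub, sub_eq_zero] at hz
      exact hz

lemma poly_witness (n : ℕ)
    (D : Submodule (Polynomial 𝔽) (Fin n → Polynomial 𝔽)) (hD : D ≠ ⊥) :
    ∃ w : ℤ → Fin n → 𝔽,
      (∀ a b : ℤ, ∃ x ∈ pToSeq '' (D : Set (Fin n → Polynomial 𝔽)),
        ∀ t : ℤ, a ≤ t → t ≤ b → x t = w t) ∧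
      w ∉ pToSeq '' (D : Set (Fin n → Polynomial 𝔽)) := by
  obtain ⟨v, hvD, hv0⟩ := (Submodule.ne_bot_iff D).mp hD
  obtain ⟨a₀, ha₀⟩ := Function.ne_iff.mp hv0
  obtain ⟨m₀, hm₀⟩ : ∃ m, (v a₀).coeff m ≠ 0 := by
    by_contra h
    push_neg at h
    exact ha₀ (Polynomial.ext fun m => by simp [h m])
  obtain ⟨N, hNpos, hsup⟩ : ∃ N : ℕ, 0 < N ∧ ∀ (a : Fin n) (y : ℕ), (v a).coeff y ≠ 0 → y < N := by
    refine ⟨(Finset.univ.sup fun a => (v a).natDegree) + 1, Nat.succ_pos _, ?_⟩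
    intro a y hy
    have h1 : y ≤ (v a).natDegree := le_natDegree_of_ne_zero hy
    have h2 : (v a).natDegree ≤ Finset.univ.sup fun a => (v a).natDegree :=
      Finset.le_sup (f := fun a => (v a).natDegree) (Finset.mem_univ a)
    omega
  have hm₀N : m₀ < N := hsup a₀ m₀ hm₀
  refine ⟨fun t a => if 0 ≤ t then (v a).coeff (t.toNat % N) else 0, ?_, ?_⟩
  · -- window approximation
    intro a b
    refine ⟨pToSeq (∑ k ∈ Finset.range (b.toNat + 1), (X ^ (N * k) : Polynomial 𝔽) • v),
      ⟨_, Submodule.sum_mem _ fun k _ => Submodule.smul_mem _ _ hvD, rfl⟩, ?_⟩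
    intro t hta htb
    funext c
    by_cases htn : 0 ≤ t
    · change _ = if 0 ≤ t then (v c).coeff (t.toNat % N) else 0
      show (if 0 ≤ t then _ else _) = _
      rw [if_pos htn, if_pos htn]
      set m : ℕ := t.toNat with hm
      have hmb : m ≤ b.toNat := by omega
      have h1 : (∑ k ∈ Finset.range (b.toNat + 1), (X ^ (N * k) : Polynomial 𝔽) • v) c
          = ∑ k ∈ Finset.range (b.toNat + 1), v c * X ^ (N * k) := by
        rw [Finset.sum_apply]
        exact Finset.sum_congr rfl fun k _ => mul_comm _ _
      rw [h1, Polynomial.finset_sum_coeff]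
      have h2 : ∀ k, (v c * X ^ (N * k)).coeff m
          = if N * k ≤ m then (v c).coeff (m - N * k) else 0 :=
        fun k => Polynomial.coeff_mul_X_pow' _ _ _
      rw [Finset.sum_congr rfl fun k _ => h2 k]
      have hmem : m / N ∈ Finset.range (b.toNat + 1) :=
        Finset.mem_range.mpr (Nat.lt_succ_of_le (le_trans (Nat.div_le_self m N) hmb))
      rw [Finset.sum_eq_single_of_mem _ hmem ?side]
      case side =>
        intro k _ hk
        rw [ite_eq_right_iff]
        intro hkm
        by_contra hnz
        have hlt : m - N * k < N := hsup c _ hnz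
        have e1 : k * N ≤ m := by rw [mul_comm]; exact hkm
        have e2 : m < (k + 1) * N := by
          have e3 : m < N * k + N := (Nat.sub_lt_iff_lt_add' hkm).mp hlt
          calc m < N * k + N := e3
          _ = (k + 1) * N := by ring
        exact hk (Nat.div_eq_of_lt_le e1 e2).symm
      · have hle : N * (m / N) ≤ m := Nat.mul_div_le m N
        rw [if_pos hle]
        have : m - N * (m / N) = m % N :=
          Nat.sub_eq_of_eq_add (by rw [Nat.add_comm, Nat.div_add_mod])
        rw [this]
    · change _ = if 0 ≤ t then (v c).coeff (t.toNat % N) else 0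
      show (if 0 ≤ t then _ else _) = _
      rw [if_neg htn, if_neg htn]
  · -- not in image
    rintro ⟨u, huD, hu⟩
    set d : ℕ := (u a₀).natDegree with hd
    set tn : ℕ := m₀ + N * (d + 1) with htn
    clear_value d tn
    have hdt : d < tn := by
      have h5 : d + 1 ≤ N * (d + 1) := Nat.le_mul_of_pos_left _ hNpos
      have h6 : tn = m₀ + N * (d + 1) := htn
      linarith
    have h0 := congrFun (congrFun hu ((tn : ℕ) : ℤ)) a₀
    have hz : pToSeq u ((tn : ℕ) : ℤ) a₀ = 0 := by
      show (if _ then _ else _) = _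
      rw [if_pos (by positivity), Int.toNat_natCast]
      exact Polynomial.coeff_eq_zero_of_natDegree_lt (hd ▸ hdt)
    have hwv : (if (0:ℤ) ≤ ((tn : ℕ) : ℤ) then (v a₀).coeff ((tn:ℤ).toNat % N) else 0)
        = (v a₀).coeff m₀ := by
      rw [if_pos (by positivity), Int.toNat_natCast, htn, Nat.add_mul_mod_self_left,
        Nat.mod_eq_of_lt hm₀N]
    rw [hz] at h0
    rw [hwv] at h0
    exact hm₀ h0.symm

end FSCC

/-- A nonzero `𝔽[z,z⁻¹]`-submodule of `𝔽^n[z,z⁻¹]` (equivalently, a nonzero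
`𝔽[z]`-submodule of `𝔽^n[z]`), viewed as a set of finite-support bi-infinite sequences, is
controllable and not complete (equivalently, not closed). -/
theorem finite_support_code_controllable_not_complete
    (𝔽 : Type) [Field 𝔽] [Fintype 𝔽] [TopologicalSpace 𝔽] [DiscreteTopology 𝔽]
    (n : ℕ)
    (C : Submodule (LaurentPolynomial 𝔽) (Fin n → LaurentPolynomial 𝔽)) (hC : C ≠ ⊥)
    (D : Submodule (Polynomial 𝔽) (Fin n → Polynomial 𝔽)) (hD : D ≠ ⊥) :
    (ControllableBehavior (lpToSeq '' (C : Set (Fin n → LaurentPolynomial 𝔽))) ∧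
      ¬ CompleteBehavior (lpToSeq '' (C : Set (Fin n → LaurentPolynomial 𝔽))) ∧
      ¬ IsClosed (lpToSeq '' (C : Set (Fin n → LaurentPolynomial 𝔽)))) ∧
    (ControllableBehavior (pToSeq '' (D : Set (Fin n → Polynomial 𝔽))) ∧
      ¬ CompleteBehavior (pToSeq '' (D : Set (Fin n → Polynomial 𝔽))) ∧
      ¬ IsClosed (pToSeq '' (D : Set (Fin n → Polynomial 𝔽)))) := by
  obtain ⟨hLc1, hLc2⟩ := FSCC.witness_conclusions _ _
    (FSCC.laurent_witness n C hC).choose_spec.1 (FSCC.laurent_witness n C hC).choose_spec.2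
  obtain ⟨hPc1, hPc2⟩ := FSCC.witness_conclusions _ _
    (FSCC.poly_witness n D hD).choose_spec.1 (FSCC.poly_witness n D hD).choose_spec.2
  exact ⟨⟨FSCC.laurent_controllable n C, hLc1, hLc2⟩,
    FSCC.poly_controllable n D, hPc1, hPc2⟩
end

section
/- (a) If C ⊆ 𝔽^n[z,z^{-1}] is the 𝔽[z,z^{-1}]-span of the columns of an n×k matrix G(z) over 𝔽[z,z^{-1}], then its annihilator C^⊥ = { w ∈ (𝔽^n)^ℤ : (w,v) = 0 for all v ∈ C } equals ker G^t(σ); in particular C^⊥ is 𝔽-linear, shift-invariant, and complete. (b) Conversely, if B = ker P(σ) ⊆ (𝔽^n)^ℤ for an r×n matrix P(z) over 𝔽[z,z^{-1}], then B^⊥ = { v ∈ 𝔽^n[z,z^{-1}] : (w,v) = 0 for all w ∈ B } equals the 𝔽[z,z^{-1}]-span of the columns of P^t(z). -/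
open Matrix

section ConvolutionalDefs

variable {𝔽 : Type} [Field 𝔽]

/-- A subset of a module is `𝔽`-linear. -/
def IsFLinearSet (𝔽 : Type) [Field 𝔽] {M : Type} [AddCommGroup M] [Module 𝔽 M]
    (C : Set M) : Prop :=
  (0 : M) ∈ C ∧ (∀ x ∈ C, ∀ y ∈ C, x + y ∈ C) ∧ ∀ (c : 𝔽), ∀ x ∈ C, c • x ∈ C

end ConvolutionalDefs


section DualityAux

open Matrix

variable {𝔽 : Type} [Field 𝔽]

private lemma mbd_L0 (f : ℤ → 𝔽) (s : ℤ) (c : 𝔽) (q : LaurentPolynomial 𝔽) :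
    (AddMonoidAlgebra.coeff ((AddMonoidAlgebra.single s c : LaurentPolynomial 𝔽) * q)).sum
        (fun i d => f i * d)
      = (AddMonoidAlgebra.coeff q).sum fun i d => f (s + i) * (c * d) := by
  induction q using AddMonoidAlgebra.induction_linear with
  | zero => simp
  | add p r hp hr =>
      rw [mul_add, AddMonoidAlgebra.coeff_add, Finsupp.sum_add_index' (by simp) (by intro a b1 b2; ring),
        AddMonoidAlgebra.coeff_add, Finsupp.sum_add_index' (by simp) (by intro a b1 b2; ring), hp, hr]
  | single a b =>
      rw [show (AddMonoidAlgebra.single s c : LaurentPolynomial 𝔽) * AddMonoidAlgebra.single a b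
            = AddMonoidAlgebra.single (s + a) (c * b) from AddMonoidAlgebra.single_mul_single ..,
        AddMonoidAlgebra.coeff_single, Finsupp.sum_single_index (by simp),
        AddMonoidAlgebra.coeff_single, Finsupp.sum_single_index (by simp)]

private lemma mbd_pair_add {n : ℕ} (w : ℤ → Fin n → 𝔽) (v v' : Fin n → LaurentPolynomial 𝔽) :
    seqPairing w (v + v') = seqPairing w v + seqPairing w v' := by
  unfold seqPairing
  rw [← Finset.sum_add_distrib]
  refine Finset.sum_congr rfl fun a _ => ?_
  show (AddMonoidAlgebra.coeff ((v a) + (v' a))).sum _ = _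
  rw [AddMonoidAlgebra.coeff_add, Finsupp.sum_add_index' (by simp) (by intro a b1 b2; ring)]

private lemma mbd_pair_zero {n : ℕ} (w : ℤ → Fin n → 𝔽) : seqPairing w 0 = 0 := by
  unfold seqPairing; simp

private lemma mbd_pair_smul {n : ℕ} (w : ℤ → Fin n → 𝔽) (c : 𝔽)
    (v : Fin n → LaurentPolynomial 𝔽) :
    seqPairing w (c • v) = c * seqPairing w v := by
  unfold seqPairing
  rw [Finset.mul_sum]
  refine Finset.sum_congr rfl fun a _ => ?_
  show (AddMonoidAlgebra.coeff (c • v a : LaurentPolynomial 𝔽)).sum _ = _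
  rw [AddMonoidAlgebra.coeff_smul, Finsupp.sum_smul_index' (by simp), Finsupp.mul_sum]
  refine Finsupp.sum_congr fun i _ => by rw [smul_eq_mul]; ring

private lemma mbd_pair_single_smul {n : ℕ} (w : ℤ → Fin n → 𝔽) (s : ℤ) (c : 𝔽)
    (g : Fin n → LaurentPolynomial 𝔽) :
    seqPairing w ((AddMonoidAlgebra.single s c : LaurentPolynomial 𝔽) • g)
      = c * ∑ a, (AddMonoidAlgebra.coeff (g a)).sum fun i d => w (s + i) a * d := by
  unfold seqPairing
  rw [Finset.mul_sum]
  refine Finset.sum_congr rfl fun a _ => ?_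
  show (AddMonoidAlgebra.coeff ((AddMonoidAlgebra.single s c : LaurentPolynomial 𝔽) * g a)).sum _ = _
  rw [mbd_L0, Finsupp.mul_sum]
  refine Finsupp.sum_congr fun i _ => by ring

private lemma mbd_lSigma_eq_pair {n k : ℕ} (M : Matrix (Fin k) (Fin n) (LaurentPolynomial 𝔽))
    (w : ℤ → Fin n → 𝔽) (t : ℤ) (b : Fin k) :
    lSigma M w t b
      = seqPairing w ((AddMonoidAlgebra.single t 1 : LaurentPolynomial 𝔽) • (M b)) := by
  rw [mbd_pair_single_smul, one_mul]
  refine Finset.sum_congr rfl fun a _ => ?_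
  refine Finsupp.sum_congr fun i _ => by ring

/-- The pairing bundled as an additive homomorphism in its second argument. -/
private noncomputable def mbd_pairHom {n : ℕ} (w : ℤ → Fin n → 𝔽) :
    (Fin n → LaurentPolynomial 𝔽) →+ 𝔽 where
  toFun := seqPairing w
  map_zero' := mbd_pair_zero w
  map_add' := mbd_pair_add w

private lemma mbd_pair_poly_smul_eq_zero {n : ℕ} (w : ℤ → Fin n → 𝔽)
    (g : Fin n → LaurentPolynomial 𝔽)
    (h : ∀ s : ℤ, seqPairing w ((AddMonoidAlgebra.single s 1 : LaurentPolynomial 𝔽) • g) = 0)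
    (p : LaurentPolynomial 𝔽) : seqPairing w (p • g) = 0 := by
  have hp : p • g = ∑ s ∈ (AddMonoidAlgebra.coeff p).support,
      ((AddMonoidAlgebra.coeff p s) • ((AddMonoidAlgebra.single s 1 :
      LaurentPolynomial 𝔽) • g)) := by
    conv_lhs => rw [← AddMonoidAlgebra.sum_coeff_single p]
    simp only [Finsupp.sum]
    rw [Finset.sum_smul]
    refine Finset.sum_congr rfl fun s _ => ?_
    rw [← smul_assoc]
    congr 1
    rw [AddMonoidAlgebra.smul_single' (AddMonoidAlgebra.coeff p s) s 1, mul_one]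
  rw [hp]
  rw [show seqPairing w (∑ s ∈ (AddMonoidAlgebra.coeff p).support, ((AddMonoidAlgebra.coeff p s) • ((AddMonoidAlgebra.single s 1 :
      LaurentPolynomial 𝔽) • g))) = mbd_pairHom w _ from rfl, map_sum]
  refine Finset.sum_eq_zero fun s _ => ?_
  show seqPairing w _ = 0
  rw [mbd_pair_smul, h s, mul_zero]

private lemma mbd_anni_eq {n k : ℕ} (M : Matrix (Fin k) (Fin n) (LaurentPolynomial 𝔽)) :
    { w : ℤ → Fin n → 𝔽 |
        ∀ v ∈ Submodule.span (LaurentPolynomial 𝔽) (Set.range M), seqPairing w v = 0 } =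
      { w : ℤ → Fin n → 𝔽 | lSigma M w = 0 } := by
  ext w
  simp only [Set.mem_setOf_eq]
  constructor
  · intro h
    funext t b
    rw [show (0 : ℤ → Fin k → 𝔽) t b = 0 from rfl, mbd_lSigma_eq_pair]
    exact h _ (Submodule.smul_mem _ _ (Submodule.subset_span (Set.mem_range_self b)))
  · intro h v hv
    obtain ⟨c, rfl⟩ := (Submodule.mem_span_range_iff_exists_fun _).mp hv
    rw [show seqPairing w (∑ i, c i • M i) = mbd_pairHom w _ from rfl, map_sum]
    refine Finset.sum_eq_zero fun b _ => ?_
    show seqPairing w _ = 0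
    refine mbd_pair_poly_smul_eq_zero w (M b) (fun s => ?_) (c b)
    rw [← mbd_lSigma_eq_pair]
    exact congrFun (congrFun h s) b

private lemma mbd_ker_zero {n k : ℕ} (M : Matrix (Fin k) (Fin n) (LaurentPolynomial 𝔽)) :
    lSigma M (0 : ℤ → Fin n → 𝔽) = 0 := by
  funext t b
  simp [lSigma, Finsupp.sum]

private lemma mbd_ker_add {n k : ℕ} (M : Matrix (Fin k) (Fin n) (LaurentPolynomial 𝔽))
    (w w' : ℤ → Fin n → 𝔽) :
    lSigma M (w + w') = lSigma M w + lSigma M w' := by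
  funext t b
  simp [lSigma, Finsupp.sum, mul_add, Finset.sum_add_distrib]

private lemma mbd_ker_smul {n k : ℕ} (M : Matrix (Fin k) (Fin n) (LaurentPolynomial 𝔽))
    (c : 𝔽) (w : ℤ → Fin n → 𝔽) :
    lSigma M (c • w) = c • lSigma M w := by
  funext t b
  simp [lSigma, Finsupp.sum, Finset.mul_sum, mul_left_comm]

private lemma mbd_ker_shift {n k : ℕ} (M : Matrix (Fin k) (Fin n) (LaurentPolynomial 𝔽))
    (w : ℤ → Fin n → 𝔽) (t : ℤ) :
    lSigma M (shiftZ w) t = lSigma M w (t + 1) := by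
  funext b
  simp only [lSigma, shiftZ]
  refine Finset.sum_congr rfl fun a _ => Finsupp.sum_congr fun i _ => ?_
  ring_nf

private lemma mbd_ker_complete {n k : ℕ} (M : Matrix (Fin k) (Fin n) (LaurentPolynomial 𝔽))
    (w : ℤ → Fin n → 𝔽)
    (hw : ∀ a b : ℤ, ∃ x, lSigma M x = 0 ∧ ∀ t : ℤ, a ≤ t → t ≤ b → x t = w t) :
    lSigma M w = 0 := by
  funext t b
  set N : ℕ := Finset.univ.sup
    (fun p : Fin k × Fin n => (AddMonoidAlgebra.coeff (M p.1 p.2)).support.sup fun i => i.natAbs) with hN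
  obtain ⟨x, hx0, hx⟩ := hw (t - (N : ℤ)) (t + (N : ℤ))
  have key : lSigma M w t b = lSigma M x t b := by
    simp only [lSigma]
    refine Finset.sum_congr rfl fun a _ => Finsupp.sum_congr fun i hi => ?_
    have h1 : i.natAbs ≤ N := le_trans
      (Finset.le_sup (f := fun i : ℤ => i.natAbs) hi)
      (Finset.le_sup (f := fun p : Fin k × Fin n => (AddMonoidAlgebra.coeff (M p.1 p.2)).support.sup fun i => i.natAbs)
        (Finset.mem_univ (b, a)))
    rw [hx (t + i) (by omega) (by omega)]
  rw [key, hx0]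

private lemma mbd_pair_of_dual {n : ℕ} (ψ : Module.Dual 𝔽 (Fin n → LaurentPolynomial 𝔽))
    (u : Fin n → LaurentPolynomial 𝔽) :
    seqPairing (fun t a => ψ ((Pi.single a (AddMonoidAlgebra.single t 1) :
      Fin n → LaurentPolynomial 𝔽))) u = ψ u := by
  conv_rhs => rw [← Finset.univ_sum_single u, map_sum]
  unfold seqPairing
  refine Finset.sum_congr rfl fun a _ => ?_
  have hu : (Pi.single a (u a) : Fin n → LaurentPolynomial 𝔽)
      = ∑ i ∈ (AddMonoidAlgebra.coeff (u a)).support, AddMonoidAlgebra.coeff (u a) i • (Pi.single a (AddMonoidAlgebra.single i 1) :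
        Fin n → LaurentPolynomial 𝔽) := by
    conv_lhs => rw [← AddMonoidAlgebra.sum_coeff_single (u a)]
    rw [show (Pi.single a ((AddMonoidAlgebra.coeff (u a)).sum AddMonoidAlgebra.single) :
          Fin n → LaurentPolynomial 𝔽)
        = LinearMap.single 𝔽 (fun _ => LaurentPolynomial 𝔽) a
          ((AddMonoidAlgebra.coeff (u a)).sum AddMonoidAlgebra.single)
      from rfl, map_finsuppSum]
    simp only [Finsupp.sum]
    refine Finset.sum_congr rfl fun i _ => ?_
    rw [← Pi.single_smul, AddMonoidAlgebra.smul_single' (AddMonoidAlgebra.coeff (u a) i) i 1, mul_one]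
    rfl
  rw [hu, map_sum]
  simp only [LinearMap.map_smul, smul_eq_mul]
  rw [Finsupp.sum]
  refine Finset.sum_congr rfl fun i _ => by ring

private lemma mbd_span_sub_anni {n r : ℕ} (P : Matrix (Fin r) (Fin n) (LaurentPolynomial 𝔽))
    (v : Fin n → LaurentPolynomial 𝔽)
    (hv : ∀ w : ℤ → Fin n → 𝔽, lSigma P w = 0 → seqPairing w v = 0) :
    v ∈ Submodule.span (LaurentPolynomial 𝔽) (Set.range P) := by
  by_contra hvW
  set W := Submodule.span (LaurentPolynomial 𝔽) (Set.range P) with hWdef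
  set W𝔽 := W.restrictScalars 𝔽 with hW𝔽
  have hv' : v ∉ W𝔽 := hvW
  have hq : W𝔽.mkQ v ≠ 0 := by
    rw [Submodule.mkQ_apply, ne_eq, Submodule.Quotient.mk_eq_zero]
    exact hv'
  obtain ⟨f, hf⟩ : ∃ f : Module.Dual 𝔽 ((Fin n → LaurentPolynomial 𝔽) ⧸ W𝔽),
      f (W𝔽.mkQ v) ≠ 0 := by
    by_contra hall
    push_neg at hall
    exact hq ((Module.forall_dual_apply_eq_zero_iff 𝔽 _).mp hall)
  set ψ : Module.Dual 𝔽 (Fin n → LaurentPolynomial 𝔽) := f.comp W𝔽.mkQ with hψ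
  set w : ℤ → Fin n → 𝔽 := fun t a => ψ ((Pi.single a (AddMonoidAlgebra.single t 1) :
    Fin n → LaurentPolynomial 𝔽)) with hwdef
  have hker : lSigma P w = 0 := by
    funext s i
    rw [show (0 : ℤ → Fin r → 𝔽) s i = 0 from rfl, mbd_lSigma_eq_pair, hwdef, mbd_pair_of_dual]
    have hmem : (AddMonoidAlgebra.single s 1 : LaurentPolynomial 𝔽) • P i ∈ W𝔽 :=
      Submodule.smul_mem _ _ (Submodule.subset_span (Set.mem_range_self i))
    rw [hψ]
    simp only [LinearMap.comp_apply, Submodule.mkQ_apply]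
    rw [(Submodule.Quotient.mk_eq_zero _).mpr hmem, map_zero]
  have hfin := hv w hker
  rw [hwdef, mbd_pair_of_dual] at hfin
  exact hf hfin

end DualityAux

/-- Pontryagin duality: (a) the annihilator of the column module of a Laurent
polynomial matrix `G(z)` is the kernel behavior `ker Gᵗ(σ)`, hence `𝔽`-linear, shift-invariant
and complete; (b) conversely, the annihilator of a kernel behavior `ker P(σ)` is the column
module of `Pᵗ(z)`. -/
theorem module_behavior_duality
    (𝔽 : Type) [Field 𝔽] [Fintype 𝔽]
    (n k r : ℕ) (G : Matrix (Fin n) (Fin k) (LaurentPolynomial 𝔽))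
    (P : Matrix (Fin r) (Fin n) (LaurentPolynomial 𝔽)) :
    (({ w : ℤ → Fin n → 𝔽 |
        ∀ v ∈ Submodule.span (LaurentPolynomial 𝔽) (Set.range Gᵀ), seqPairing w v = 0 } =
          { w : ℤ → Fin n → 𝔽 | lSigma Gᵀ w = 0 }) ∧
      IsFLinearSet 𝔽 { w : ℤ → Fin n → 𝔽 | lSigma Gᵀ w = 0 } ∧
      ShiftInvariant { w : ℤ → Fin n → 𝔽 | lSigma Gᵀ w = 0 } ∧
      CompleteBehavior { w : ℤ → Fin n → 𝔽 | lSigma Gᵀ w = 0 }) ∧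
    ({ v : Fin n → LaurentPolynomial 𝔽 |
        ∀ w ∈ { w : ℤ → Fin n → 𝔽 | lSigma P w = 0 }, seqPairing w v = 0 } =
      (Submodule.span (LaurentPolynomial 𝔽) (Set.range Pᵀᵀ) :
        Set (Fin n → LaurentPolynomial 𝔽))) := by
  constructor
  · refine ⟨mbd_anni_eq Gᵀ, ?_, ?_, ?_⟩
    · refine ⟨mbd_ker_zero Gᵀ, fun x hx y hy => ?_, fun c x hx => ?_⟩
      · show lSigma Gᵀ (x + y) = 0
        rw [mbd_ker_add, hx, hy, add_zero]
      · show lSigma Gᵀ (c • x) = 0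
        rw [mbd_ker_smul, hx, smul_zero]
    · intro w hw
      show lSigma Gᵀ (shiftZ w) = 0
      funext t
      rw [mbd_ker_shift]
      exact congrFun hw (t + 1)
    · intro w hw
      refine mbd_ker_complete Gᵀ w fun a b => ?_
      obtain ⟨x, hx1, hx2⟩ := hw a b
      exact ⟨x, hx1, hx2⟩
  · ext v
    simp only [Set.mem_setOf_eq, Matrix.transpose_transpose, SetLike.mem_coe]
    constructor
    · intro hv
      exact mbd_span_sub_anni P v hv
    · intro hv w hw
      exact (Set.ext_iff.mp (mbd_anni_eq P) w).mpr hw v hv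
end
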